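/- For all w > 0 and φ ∈ (0, π): (φ/(2π))·F₂(w²) + (π-φ)/(2π) + (1/π)·∫_0^{π/2} F₂(w²/cos²θ) dθ = (φ/(2π))·F₂(w²) + (π-φ)/(2π) + (1/2)·F₁(w²), i.e., (1/π)·∫_0^{π/2} F₂(w²/cos²θ) dθ = (1/2)·F₁(w²); equivalently ∫_0^{π/2} (1 - e^{-w²/(2cos²θ)}) dθ = π(Φ(w) - 1/2). -/

import Mathlib

open MeasureTheory ProbabilityTheory Real
open Set

/-- The cdf of the chi-squared distribution with 2 degrees of freedom: `F₂(t) = 1 - e^{-t/2}`. -/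
noncomputable def chi2cdf (t : ℝ) : ℝ := 1 - Real.exp (-(t / 2))

/-- The standard normal cdf `Φ`. -/
noncomputable def stdNormalCDF (x : ℝ) : ℝ := ((gaussianReal 0 1) (Set.Iic x)).toReal

/-- The cdf of the chi-squared distribution with 1 degree of freedom: `F₁(t) = 2Φ(√t) - 1`. -/
noncomputable def chi1cdf (t : ℝ) : ℝ := 2 * stdNormalCDF (Real.sqrt t) - 1

lemma craig_meas (a : ℝ) : Measurable (fun θ : ℝ => Real.exp (-(a ^ 2 / (2 * Real.cos θ ^ 2)))) :=
  Real.measurable_exp.comp ((measurable_const.div ((Real.measurable_cos.pow_const 2).const_mul 2)).neg)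

lemma craig_le_one (a θ : ℝ) : Real.exp (-(a ^ 2 / (2 * Real.cos θ ^ 2))) ≤ 1 := by
  rw [Real.exp_le_one_iff]
  simp only [neg_nonpos]
  positivity

-- integrability of the integrand
lemma craig_integrable (a : ℝ) :
    IntervalIntegrable (fun θ : ℝ => Real.exp (-(a ^ 2 / (2 * Real.cos θ ^ 2)))) volume 0 (π/2) := by
  rw [intervalIntegrable_iff]
  refine Integrable.mono' (g := fun _ : ℝ => (1:ℝ)) ?_ ?_ ?_
  · exact integrableOn_const measure_Ioc_lt_top.ne
  · exact (craig_meas a).aestronglyMeasurable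
  · refine Filter.Eventually.of_forall fun θ => ?_
    rw [Real.norm_eq_abs, abs_of_pos (Real.exp_pos _)]
    exact craig_le_one a θ

lemma craig_image {a : ℝ} (ha : 0 < a) :
    (fun θ : ℝ => a * Real.tan θ) '' Ioo 0 (π/2) = Ioi 0 := by
  ext t
  constructor
  · rintro ⟨θ, ⟨h1, h2⟩, rfl⟩
    have hc : 0 < Real.cos θ := Real.cos_pos_of_mem_Ioo ⟨by linarith [pi_pos], h2⟩
    have hs : 0 < Real.sin θ := Real.sin_pos_of_pos_of_lt_pi h1 (by linarith [pi_pos])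
    have : 0 < Real.tan θ := by rw [Real.tan_eq_sin_div_cos]; positivity
    exact mul_pos ha this
  · intro ht
    refine ⟨Real.arctan (t / a), ⟨?_, Real.arctan_lt_pi_div_two _⟩, ?_⟩
    · have := Real.arctan_strictMono (div_pos (mem_Ioi.mp ht) ha)
      rwa [Real.arctan_zero] at this
    · show a * Real.tan (Real.arctan (t / a)) = t
      rw [Real.tan_arctan]
      field_simp

lemma craig_subst {a : ℝ} (ha : 0 < a) :
    ∫ θ in Ioo 0 (π/2), (a / Real.cos θ ^ 2) * Real.exp (-(a ^ 2 / (2 * Real.cos θ ^ 2)))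
      = Real.sqrt (π/2) * Real.exp (-(a ^ 2 / 2)) := by
  have key := integral_image_eq_integral_abs_deriv_smul (s := Ioo 0 (π/2))
      (f := fun θ => a * Real.tan θ) (f' := fun θ => a / Real.cos θ ^ 2)
      measurableSet_Ioo
      (fun θ hθ => by
        have hc : Real.cos θ ≠ 0 :=
          (Real.cos_pos_of_mem_Ioo ⟨by linarith [hθ.1, pi_pos], hθ.2⟩).ne'
        have := ((Real.hasDerivAt_tan hc).const_mul a).hasDerivWithinAt (s := Ioo 0 (π/2))
        convert this using 1 <;> first | rfl | ring)
      (fun x hx y hy h => by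
        have hx' : x ∈ Ioo (-(π/2)) (π/2) := ⟨by linarith [hx.1, pi_pos], hx.2⟩
        have hy' : y ∈ Ioo (-(π/2)) (π/2) := ⟨by linarith [hy.1, pi_pos], hy.2⟩
        exact Real.injOn_tan hx' hy' (mul_left_cancel₀ ha.ne' h))
      (fun t => Real.exp (-((a ^ 2 + t ^ 2) / 2)))
  rw [craig_image ha] at key
  have h1 : ∀ θ ∈ Ioo 0 (π/2),
      |a / Real.cos θ ^ 2| • Real.exp (-((a ^ 2 + (a * Real.tan θ) ^ 2) / 2))
        = (a / Real.cos θ ^ 2) * Real.exp (-(a ^ 2 / (2 * Real.cos θ ^ 2))) := by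
    intro θ hθ
    have hc : 0 < Real.cos θ := Real.cos_pos_of_mem_Ioo ⟨by linarith [hθ.1, pi_pos], hθ.2⟩
    have h2 : a ^ 2 + (a * Real.tan θ) ^ 2 = a ^ 2 / Real.cos θ ^ 2 := by
      rw [Real.tan_eq_sin_div_cos]
      have := Real.sin_sq_add_cos_sq θ
      field_simp
      nlinarith [this]
    rw [h2, smul_eq_mul, abs_of_pos (by positivity)]
    ring_nf
  rw [setIntegral_congr_fun measurableSet_Ioo h1] at key
  rw [← key]
  have h3 : ∀ t : ℝ, Real.exp (-((a ^ 2 + t ^ 2) / 2))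
      = Real.exp (-(a ^ 2 / 2)) * Real.exp (-(1/2 : ℝ) * t ^ 2) := by
    intro t
    rw [← Real.exp_add]
    ring_nf
  simp_rw [h3]
  rw [MeasureTheory.integral_const_mul, integral_gaussian_Ioi]
  have h4 : Real.sqrt (π / (1/2)) / 2 = Real.sqrt (π/2) := by
    rw [show π / (1/2 : ℝ) = (π/2) * 2 ^ 2 by ring, Real.sqrt_mul (by positivity),
      Real.sqrt_sq (by norm_num : (0:ℝ) ≤ 2)]
    ring
  rw [h4]
  ring

lemma craig_pointwise_deriv (b : ℝ) (θ : ℝ) :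
    HasDerivAt (fun b : ℝ => Real.exp (-(b ^ 2 / (2 * Real.cos θ ^ 2))))
      (-(b / Real.cos θ ^ 2) * Real.exp (-(b ^ 2 / (2 * Real.cos θ ^ 2)))) b := by
  by_cases hc : Real.cos θ = 0
  · have h1 : (fun b : ℝ => Real.exp (-(b ^ 2 / (2 * Real.cos θ ^ 2)))) = fun _ => 1 := by
      funext x; rw [hc]; norm_num
    rw [h1, hc]
    norm_num
    exact hasDerivAt_const b 1
  · have hc2 : (2 * Real.cos θ ^ 2) ≠ 0 := by positivity
    have inner : HasDerivAt (fun b : ℝ => -(b ^ 2 / (2 * Real.cos θ ^ 2)))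
        (-(2 * b / (2 * Real.cos θ ^ 2))) b := by
      have := ((hasDerivAt_pow 2 b).div_const (2 * Real.cos θ ^ 2)).neg
      convert this using 1 <;> first | rfl | norm_num
    have := inner.exp
    convert this using 1
    field_simp

lemma craig_xexp {x : ℝ} (hx : 0 ≤ x) : x * Real.exp (-x) ≤ 1 := by
  rw [Real.exp_neg, ← div_eq_mul_inv, div_le_one (Real.exp_pos x)]
  linarith [Real.add_one_le_exp x]

lemma craig_deriv {a : ℝ} (ha : 0 < a) :
    HasDerivAt (fun b : ℝ => ∫ θ in (0:ℝ)..(π/2), Real.exp (-(b ^ 2 / (2 * Real.cos θ ^ 2))))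
      (-(Real.sqrt (π/2) * Real.exp (-(a ^ 2 / 2)))) a := by
  have main := intervalIntegral.hasDerivAt_integral_of_dominated_loc_of_deriv_le
    (F := fun b θ => Real.exp (-(b ^ 2 / (2 * Real.cos θ ^ 2))))
    (F' := fun b θ => -(b / Real.cos θ ^ 2) * Real.exp (-(b ^ 2 / (2 * Real.cos θ ^ 2))))
    (x₀ := a) (a := (0:ℝ)) (b := π/2) (μ := volume) (bound := fun _ => 4 / a)
    (Metric.ball_mem_nhds a (half_pos ha))
    (Filter.Eventually.of_forall fun b => (craig_meas b).aestronglyMeasurable.restrict)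
    (craig_integrable a)
    (((measurable_const.div (Real.measurable_cos.pow_const 2)).neg.mul
      (craig_meas a)).aestronglyMeasurable.restrict)
    ?_ (intervalIntegrable_const) ?_
  · obtain ⟨-, hd⟩ := main
    convert hd using 1
    case e'_4 => rfl
    case e'_5 => rfl
    have h0 : (0:ℝ) ≤ π/2 := by positivity
    rw [intervalIntegral.integral_of_le h0, MeasureTheory.integral_Ioc_eq_integral_Ioo]
    simp only [neg_mul]
    rw [MeasureTheory.integral_neg, craig_subst ha]
  · refine Filter.Eventually.of_forall fun θ _ b hb => ?_
    have hb1 : a / 2 < b := by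
      have h := abs_lt.mp (show |b - a| < a / 2 from Metric.mem_ball.mp hb)
      linarith [h.1]
    have hbpos : 0 < b := lt_trans (half_pos ha) hb1
    by_cases hc : Real.cos θ = 0
    · rw [hc]
      norm_num
      positivity
    · have hc2 : 0 < Real.cos θ ^ 2 := by positivity
      rw [norm_mul, norm_neg, Real.norm_eq_abs, Real.norm_eq_abs,
        abs_of_pos (by positivity : (0:ℝ) < b / Real.cos θ ^ 2),
        abs_of_pos (Real.exp_pos _)]
      have hx : (0:ℝ) ≤ b ^ 2 / (2 * Real.cos θ ^ 2) := by positivity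
      have key := craig_xexp hx
      have heq : b / Real.cos θ ^ 2 * Real.exp (-(b ^ 2 / (2 * Real.cos θ ^ 2)))
          = (2 / b) * ((b ^ 2 / (2 * Real.cos θ ^ 2)) * Real.exp (-(b ^ 2 / (2 * Real.cos θ ^ 2)))) := by
        field_simp
      rw [heq]
      have h2b : 2 / b ≤ 4 / a := by
        rw [div_le_div_iff₀ hbpos ha]
        linarith
      calc (2 / b) * ((b ^ 2 / (2 * Real.cos θ ^ 2)) * Real.exp (-(b ^ 2 / (2 * Real.cos θ ^ 2))))
          ≤ (2 / b) * 1 := by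
            apply mul_le_mul_of_nonneg_left key (by positivity)
        _ = 2 / b := mul_one _
        _ ≤ 4 / a := h2b
  · exact Filter.Eventually.of_forall fun θ _ b _ => craig_pointwise_deriv b θ

lemma craig_G_cont : Continuous (fun b : ℝ => ∫ θ in Ioc (0:ℝ) (π/2), Real.exp (-(b ^ 2 / (2 * Real.cos θ ^ 2)))) := by
  refine MeasureTheory.continuous_of_dominated (bound := fun _ => (1:ℝ)) ?_ ?_ ?_ ?_
  · exact fun b => (craig_meas b).aestronglyMeasurable.restrict
  · refine fun b => Filter.Eventually.of_forall fun θ => ?_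
    rw [Real.norm_eq_abs, abs_of_pos (Real.exp_pos _)]
    exact craig_le_one b θ
  · exact integrableOn_const measure_Ioc_lt_top.ne
  · refine Filter.Eventually.of_forall fun θ => ?_
    exact Real.continuous_exp.comp (((continuous_pow 2).div_const _).neg)

lemma craig_G_eval {w : ℝ} (hw : 0 < w) :
    (∫ θ in (0:ℝ)..(π/2), Real.exp (-(w ^ 2 / (2 * Real.cos θ ^ 2))))
      = π/2 - Real.sqrt (π/2) * ∫ x in (0:ℝ)..w, Real.exp (-(x ^ 2 / 2)) := by
  set G : ℝ → ℝ := fun b => ∫ θ in (0:ℝ)..(π/2), Real.exp (-(b ^ 2 / (2 * Real.cos θ ^ 2))) with hG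
  set f : ℝ → ℝ := fun x => -(Real.sqrt (π/2) * Real.exp (-(x ^ 2 / 2))) with hf
  have hfc : Continuous f := by
    apply Continuous.neg
    exact continuous_const.mul (Real.continuous_exp.comp ((continuous_pow 2).div_const 2).neg)
  have step1 : ∀ ε ∈ Ioo (0:ℝ) w, G w = G ε + ∫ x in ε..w, f x := by
    intro ε hε
    have := intervalIntegral.integral_eq_sub_of_hasDerivAt (f := G) (f' := f)
      (a := ε) (b := w) ?_ (hfc.intervalIntegrable ε w)
    · linarith [this]
    · intro x hx
      rw [uIcc_of_le hε.2.le] at hx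
      exact craig_deriv (lt_of_lt_of_le hε.1 hx.1)
  -- limits
  have hGc : Filter.Tendsto G (nhds 0) (nhds (π/2)) := by
    have h0 : (0:ℝ) ≤ π/2 := by positivity
    have hGeq : G = fun b => ∫ θ in Ioc (0:ℝ) (π/2), Real.exp (-(b ^ 2 / (2 * Real.cos θ ^ 2))) := by
      funext b
      exact intervalIntegral.integral_of_le h0
    have hG0 : (∫ θ in Ioc (0:ℝ) (π/2), Real.exp (-((0:ℝ) ^ 2 / (2 * Real.cos θ ^ 2)))) = π/2 := by
      norm_num
      positivity
    rw [hGeq]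
    have := craig_G_cont.tendsto 0
    rwa [hG0] at this
  have hIc : Filter.Tendsto (fun ε => ∫ x in ε..w, f x) (nhds 0) (nhds (∫ x in (0:ℝ)..w, f x)) := by
    have hprim : Continuous (fun ε => ∫ x in (0:ℝ)..ε, f x) :=
      intervalIntegral.continuous_primitive (fun a b => hfc.intervalIntegrable a b) 0
    have hsplit : ∀ ε : ℝ, (∫ x in ε..w, f x) = (∫ x in (0:ℝ)..w, f x) - ∫ x in (0:ℝ)..ε, f x := by
      intro ε
      rw [← intervalIntegral.integral_interval_sub_left (hfc.intervalIntegrable 0 w)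
        (hfc.intervalIntegrable 0 ε)]
    have h2 := (hprim.tendsto 0)
    simp only [intervalIntegral.integral_same] at h2
    have h3 := (tendsto_const_nhds (x := ∫ x in (0:ℝ)..w, f x) (f := nhds (0:ℝ))).sub h2
    rw [sub_zero] at h3
    exact Filter.Tendsto.congr (fun ε => (hsplit ε).symm) h3
  have hcomb : Filter.Tendsto (fun ε => G ε + ∫ x in ε..w, f x) (nhdsWithin 0 (Ioi 0))
      (nhds (π/2 + ∫ x in (0:ℝ)..w, f x)) :=
    ((hGc.add hIc).mono_left nhdsWithin_le_nhds)
  have hconst : Filter.Tendsto (fun _ : ℝ => G w) (nhdsWithin 0 (Ioi 0)) (nhds (G w)) :=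
    tendsto_const_nhds
  have hev : ∀ᶠ ε in nhdsWithin 0 (Ioi 0), G w = G ε + ∫ x in ε..w, f x := by
    filter_upwards [Ioo_mem_nhdsGT_of_mem (Set.mem_Ico.mpr ⟨le_refl 0, hw⟩)] with ε hε
    exact step1 ε hε
  have := tendsto_nhds_unique (hconst.congr' hev) hcomb
  show G w = _
  rw [this]
  simp only [hf]
  rw [intervalIntegral.integral_neg, intervalIntegral.integral_const_mul]
  ring


lemma gauss_pdf_eq : gaussianPDFReal 0 1 = fun t => (Real.sqrt (2*π))⁻¹ * Real.exp (-(t^2/2)) := by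
  funext t
  rw [gaussianPDFReal]
  norm_num
  left; ring

lemma stdNormalCDF_eq (x : ℝ) :
    stdNormalCDF x = ∫ t in Iic x, (Real.sqrt (2*π))⁻¹ * Real.exp (-(t^2/2)) := by
  rw [stdNormalCDF, gaussianReal_apply_eq_integral 0 one_ne_zero,
    ENNReal.toReal_ofReal (MeasureTheory.integral_nonneg (gaussianPDFReal_nonneg 0 1)),
    gauss_pdf_eq]

lemma gauss_Ioi : (∫ x in Ioi (0:ℝ), Real.exp (-(x^2/2))) = Real.sqrt (2*π) / 2 := by
  have h := integral_gaussian_Ioi (1/2)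
  have he : ∀ x : ℝ, Real.exp (-(1/2 : ℝ) * x ^ 2) = Real.exp (-(x^2/2)) := by
    intro x; ring_nf
  simp_rw [he] at h
  rw [h]
  rw [show π / (1/2 : ℝ) = 2 * π by ring]

lemma stdNormalCDF_zero : stdNormalCDF 0 = 1/2 := by
  rw [stdNormalCDF_eq, MeasureTheory.integral_const_mul]
  have hrefl : (∫ x in Iic (0:ℝ), Real.exp (-(x^2/2))) = ∫ x in Ioi (0:ℝ), Real.exp (-(x^2/2)) := by
    have := integral_comp_neg_Iic (c := (0:ℝ)) (f := fun x => Real.exp (-(x^2/2)))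
    simp only [neg_zero] at this
    rw [← this]
    congr 1
    funext x
    ring_nf
  rw [hrefl, gauss_Ioi]
  have h2 : Real.sqrt (2*π) ≠ 0 := by positivity
  field_simp

lemma stdNormalCDF_sub (w : ℝ) :
    stdNormalCDF w - 1/2 = (Real.sqrt (2*π))⁻¹ * ∫ x in (0:ℝ)..w, Real.exp (-(x^2/2)) := by
  have hint : Integrable (fun t : ℝ => (Real.sqrt (2*π))⁻¹ * Real.exp (-(t^2/2))) := by
    have := integrable_gaussianPDFReal 0 1
    rwa [gauss_pdf_eq] at this
  rw [← stdNormalCDF_zero, stdNormalCDF_eq, stdNormalCDF_eq,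
    intervalIntegral.integral_Iic_sub_Iic hint.integrableOn hint.integrableOn,
    intervalIntegral.integral_const_mul]


/-- For all `w > 0` and `φ ∈ (0, π)`:
`(φ/(2π))·F₂(w²) + (π-φ)/(2π) + (1/π)·∫_0^{π/2} F₂(w²/cos²θ) dθ
 = (φ/(2π))·F₂(w²) + (π-φ)/(2π) + (1/2)·F₁(w²)`, i.e.
`(1/π)·∫_0^{π/2} F₂(w²/cos²θ) dθ = (1/2)·F₁(w²)`; equivalently
`∫_0^{π/2} (1 - e^{-w²/(2cos²θ)}) dθ = π(Φ(w) - 1/2)`. -/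
theorem one_sided_methods_agree (w : ℝ) (hw : 0 < w) :
    (∀ φ ∈ Set.Ioo (0 : ℝ) π,
      (φ / (2 * π)) * chi2cdf (w ^ 2) + (π - φ) / (2 * π) +
          (1 / π) * ∫ θ in (0 : ℝ)..(π / 2), chi2cdf (w ^ 2 / Real.cos θ ^ 2) =
        (φ / (2 * π)) * chi2cdf (w ^ 2) + (π - φ) / (2 * π) + (1 / 2) * chi1cdf (w ^ 2)) ∧
    (1 / π) * (∫ θ in (0 : ℝ)..(π / 2), chi2cdf (w ^ 2 / Real.cos θ ^ 2)) =
      (1 / 2) * chi1cdf (w ^ 2) ∧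
    (∫ θ in (0 : ℝ)..(π / 2), (1 - Real.exp (-(w ^ 2 / (2 * Real.cos θ ^ 2))))) =
      π * (stdNormalCDF w - 1 / 2) := by
  have h1 : Real.sqrt (π/2) * Real.sqrt (2*π) = π := by
    rw [← Real.sqrt_mul (by positivity), show (π/2)*(2*π) = π^2 by ring, Real.sqrt_sq pi_nonneg]
  have h2 : Real.sqrt (2*π) ≠ 0 := by positivity
  have hI : Real.sqrt (π/2) = π * (Real.sqrt (2*π))⁻¹ := by
    rw [← div_eq_mul_inv, eq_div_iff h2]
    exact h1
  have hkey : (∫ θ in (0 : ℝ)..(π / 2), (1 - Real.exp (-(w ^ 2 / (2 * Real.cos θ ^ 2))))) =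
      π * (stdNormalCDF w - 1 / 2) := by
    have hsub : (∫ θ in (0:ℝ)..(π/2), (1 - Real.exp (-(w ^ 2 / (2 * Real.cos θ ^ 2)))))
        = (∫ _θ in (0:ℝ)..(π/2), (1:ℝ)) -
          ∫ θ in (0:ℝ)..(π/2), Real.exp (-(w ^ 2 / (2 * Real.cos θ ^ 2))) :=
      intervalIntegral.integral_sub intervalIntegrable_const (craig_integrable w)
    rw [hsub, intervalIntegral.integral_const, craig_G_eval hw, stdNormalCDF_sub w,
      smul_eq_mul, hI]
    ring
  have hfun : ∀ θ : ℝ, chi2cdf (w^2 / Real.cos θ^2) = 1 - Real.exp (-(w^2/(2*Real.cos θ^2))) := by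
    intro θ
    rw [chi2cdf, div_div, mul_comm (Real.cos θ ^ 2) 2]
  have hchi1 : chi1cdf (w^2) = 2 * stdNormalCDF w - 1 := by
    rw [chi1cdf, Real.sqrt_sq hw.le]
  have h2nd : (1 / π) * (∫ θ in (0 : ℝ)..(π / 2), chi2cdf (w ^ 2 / Real.cos θ ^ 2)) =
      (1 / 2) * chi1cdf (w ^ 2) := by
    simp_rw [hfun]
    rw [hkey, hchi1]
    field_simp
  exact ⟨fun φ _ => by rw [h2nd], h2nd, hkey⟩
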